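/- Suppose x⁰ ∈ ℂ^n satisfies |⟨a_i, x⁰⟩| = b_i for i = 1,…,m and ⟨x⁰, x̂⟩ is real and nonnegative. If for every unit vector δ ∈ ℂ^n with ⟨δ, x̂⟩ real and nonnegative there exists an index i such that Re(conj(⟨a_i, x⁰⟩)·⟨a_i, δ⟩) > 0, then x⁰ is the unique maximizer of Re⟨x, x̂⟩ over the set {x ∈ ℂ^n : |⟨a_i, x⟩| ≤ b_i for all i}. -/

import Mathlib

/-- PhaseMax uniqueness condition (complex case, Theorem 2). If every aligned unit
ascent direction `δ` admits a measurement `i` with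
`Re(conj⟨a_i,x⁰⟩·⟨a_i,δ⟩) > 0`, then `x⁰` uniquely maximizes `Re⟨x, x̂⟩` over the
feasible set `{x : |⟨a_i,x⟩| ≤ b_i}`. -/
theorem phasemax_uniqueness_complex {n m : ℕ}
    (a : Fin m → EuclideanSpace ℂ (Fin n)) (b : Fin m → ℝ)
    (x0 xhat : EuclideanSpace ℂ (Fin n))
    (hb : ∀ i, 0 ≤ b i)
    (hmeas : ∀ i, ‖(inner ℂ (a i) x0 : ℂ)‖ = b i)
    (halign_im : (inner ℂ x0 xhat : ℂ).im = 0)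
    (halign_re : 0 ≤ (inner ℂ x0 xhat : ℂ).re)
    (hcond : ∀ δ : EuclideanSpace ℂ (Fin n), ‖δ‖ = 1 →
      (inner ℂ δ xhat : ℂ).im = 0 → 0 ≤ (inner ℂ δ xhat : ℂ).re →
      ∃ i, 0 < ((starRingEnd ℂ) (inner ℂ (a i) x0 : ℂ) * (inner ℂ (a i) δ : ℂ)).re) :
    ∀ x : EuclideanSpace ℂ (Fin n),
      (∀ i, ‖(inner ℂ (a i) x : ℂ)‖ ≤ b i) →
      (inner ℂ x0 xhat : ℂ).re ≤ (inner ℂ x xhat : ℂ).re → x = x0 := by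
  intro x hfeas hmax
  set z : ℂ := inner ℂ x xhat with hz
  set r : ℝ := (inner ℂ x0 xhat : ℂ).re with hr
  have hx0c : (inner ℂ x0 xhat : ℂ) = (r : ℂ) := by
    apply Complex.ext
    · simp only [Complex.ofReal_re, hr]
    · simp only [Complex.ofReal_im, halign_im]
  set c : ℂ := if z = 0 then 1 else z / ((‖z‖ : ℝ) : ℂ) with hc
  have hcabs : ‖c‖ = 1 := by
    by_cases h : z = 0
    · simp [hc, h]
    · rw [hc, if_neg h, norm_div, Complex.norm_real, norm_norm,
        div_self (norm_ne_zero_iff.mpr h)]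
  have hcz : (starRingEnd ℂ) c * z = (‖z‖ : ℂ) := by
    by_cases h : z = 0
    · simp [h]
    · have habs : (‖z‖ : ℂ) ≠ 0 := by
        simpa using h
      rw [hc, if_neg h, map_div₀, Complex.conj_ofReal]
      field_simp
      rw [mul_comm, Complex.mul_conj, Complex.normSq_eq_norm_sq]
      push_cast
      ring
  set y : EuclideanSpace ℂ (Fin n) := c • x with hy
  have hyin : (inner ℂ y xhat : ℂ) = (‖z‖ : ℂ) := by
    rw [hy, inner_smul_left, ← hz, hcz]
  have hyfeas : ∀ i, ‖(inner ℂ (a i) y : ℂ)‖ ≤ b i := by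
    intro i
    rw [hy, inner_smul_right, norm_mul, hcabs, one_mul]
    exact hfeas i
  set δ' : EuclideanSpace ℂ (Fin n) := y - x0 with hδ'
  have hkey : ∀ i, ((starRingEnd ℂ) (inner ℂ (a i) x0 : ℂ) * (inner ℂ (a i) δ' : ℂ)).re ≤ 0 := by
    intro i
    set u : ℂ := inner ℂ (a i) x0 with hu
    set v : ℂ := inner ℂ (a i) δ' with hv
    have hsum : (inner ℂ (a i) y : ℂ) = u + v := by
      rw [hv, hδ', inner_sub_right]; ring
    have h1 : ‖u + v‖ ≤ ‖u‖ := by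
      rw [← hsum, hmeas i] at *
      exact hyfeas i
    have h2 : Complex.normSq (u + v) ≤ Complex.normSq u := by
      rw [Complex.normSq_eq_norm_sq, Complex.normSq_eq_norm_sq]
      exact pow_le_pow_left₀ (norm_nonneg _) h1 2
    rw [Complex.normSq_add] at h2
    have h3 : (u * (starRingEnd ℂ) v).re ≤ 0 := by
      nlinarith [Complex.normSq_nonneg v]
    have h4 : ((starRingEnd ℂ) u * v).re = (u * (starRingEnd ℂ) v).re := by
      have : (starRingEnd ℂ) ((starRingEnd ℂ) u * v) = u * (starRingEnd ℂ) v := by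
        simp [map_mul]
      rw [← this, Complex.conj_re]
    rw [h4]; exact h3
  have hrez : r ≤ z.re := hmax
  have hrele : z.re ≤ ‖z‖ := Complex.re_le_norm z
  have hδin : (inner ℂ δ' xhat : ℂ) = ((‖z‖ - r : ℝ) : ℂ) := by
    rw [hδ', inner_sub_left, hyin, hx0c]
    push_cast; ring
  have hδ0 : δ' = 0 := by
    by_contra hne
    have hnorm : ‖δ'‖ ≠ 0 := norm_ne_zero_iff.mpr hne
    set t : ℝ := ‖δ'‖⁻¹ with ht
    have htpos : 0 < t := by positivity
    set δ : EuclideanSpace ℂ (Fin n) := (t : ℂ) • δ' with hδ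
    have hδnorm : ‖δ‖ = 1 := by
      rw [hδ, norm_smul]
      simp [ht, Complex.norm_real, abs_of_nonneg (le_of_lt htpos)]
      field_simp
    have hδin2 : (inner ℂ δ xhat : ℂ) = ((t * (‖z‖ - r) : ℝ) : ℂ) := by
      rw [hδ, inner_smul_left, Complex.conj_ofReal, hδin]
      push_cast; ring
    have him : (inner ℂ δ xhat : ℂ).im = 0 := by rw [hδin2]; simp
    have hrepos : 0 ≤ (inner ℂ δ xhat : ℂ).re := by
      rw [hδin2]
      simp only [Complex.ofReal_re]
      have : 0 ≤ ‖z‖ - r := by linarith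
      positivity
    obtain ⟨i, hi⟩ := hcond δ hδnorm him hrepos
    have : ((starRingEnd ℂ) (inner ℂ (a i) x0 : ℂ) * (inner ℂ (a i) δ : ℂ)).re
        = t * ((starRingEnd ℂ) (inner ℂ (a i) x0 : ℂ) * (inner ℂ (a i) δ' : ℂ)).re := by
      rw [hδ, inner_smul_right]
      rw [show (starRingEnd ℂ) (inner ℂ (a i) x0 : ℂ) * ((t:ℂ) * (inner ℂ (a i) δ' : ℂ))
          = (t:ℂ) * ((starRingEnd ℂ) (inner ℂ (a i) x0 : ℂ) * (inner ℂ (a i) δ' : ℂ)) by ring]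
      rw [Complex.re_ofReal_mul]
    rw [this] at hi
    nlinarith [hkey i]
  have hyx0 : y = x0 := by
    have := hδ0
    rw [hδ'] at this
    linear_combination (norm := abel) this
  -- From y = x0 : |z| = r
  have habs_r : (‖z‖ : ℂ) = (r : ℂ) := by rw [← hyin, hyx0, hx0c]
  have habs_r' : ‖z‖ = r := by exact_mod_cast habs_r
  by_cases h : z = 0
  · have : c = 1 := by rw [hc, if_pos h]
    rw [hy, this, one_smul] at hyx0
    exact hyx0
  · have hrne : r ≠ 0 := by
      intro h0
      rw [h0] at habs_r'
      exact h (norm_eq_zero.mp habs_r')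
    have hzre : z.re = r := le_antisymm (by rw [← habs_r']; exact hrele) hrez
    have hzim : z.im = 0 := by
      have h1 : Complex.normSq z = ‖z‖ ^ 2 := Complex.normSq_eq_norm_sq z
      have h2 : z.re ^ 2 + z.im ^ 2 = r ^ 2 := by
        rw [← habs_r', ← h1, Complex.normSq_apply]; ring
      nlinarith [hzre]
    have hzr : z = (r : ℂ) := Complex.ext hzre hzim
    have : c = 1 := by
      rw [hc, if_neg h, hzr, Complex.norm_real, Real.norm_of_nonneg halign_re]
      exact div_self (Complex.ofReal_ne_zero.mpr hrne)
    rw [hy, this, one_smul] at hyx0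
    exact hyx0
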